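/- Let N = k^t q with k ≥ 2, t ≥ 1, gcd(q,k)=1, and let f(A) = (kA + A_{t-1}) mod N as above. Let M = ord_k(N-q) be the multiplicative order of k modulo N - q. Then f^M(x) = x for every x ∈ {0,...,N-1}; i.e., every cycle length of f divides ord_k(N-q). -/

import Mathlib

/-- Geometric sum `1 + b + ... + b^(s-1)` (as `b*G+1` recursion). -/
def geomS (b : ℕ) : ℕ → ℕ
  | 0 => 0
  | s + 1 => b * geomS b s + 1

lemma geomS_spec (b : ℕ) (hb : 1 ≤ b) : ∀ s, (b - 1) * geomS b s + 1 = b ^ s := by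
  obtain ⟨b', rfl⟩ : ∃ b', b = b' + 1 := ⟨b - 1, by omega⟩
  intro s
  induction s with
  | zero => simp [geomS]
  | succ s ih =>
    show (b' + 1 - 1) * ((b' + 1) * geomS (b' + 1) s + 1) + 1 = (b' + 1) ^ (s + 1)
    simp only [Nat.add_sub_cancel] at ih ⊢
    rw [pow_succ, ← ih]
    ring

lemma modlem (P q a y : ℕ) (hq : 0 < q) (hy : y < P) :
    (P * a + y) % (P * q) = P * (a % q) + y := by
  have h1 : P * a + y = (P * (a % q) + y) + (P * q) * (a / q) := by
    conv_lhs => rw [← Nat.div_add_mod a q]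
    ring
  rw [h1, Nat.add_mul_mod_self_left]
  apply Nat.mod_eq_of_lt
  have h2 : a % q < q := Nat.mod_lt _ hq
  calc P * (a % q) + y < P * (a % q) + P := by omega
    _ = P * (a % q + 1) := by ring
    _ ≤ P * q := Nat.mul_le_mul_left _ (by omega)

section Main

variable (k t q N : ℕ) (hk : 2 ≤ k) (ht : 1 ≤ t) (hq : 1 ≤ q) (hN : N = k ^ t * q)
variable (f : ℕ → ℕ) (hf : ∀ A, f A = (k * A + A / k ^ (t - 1) % k) % N)

include hk ht hq hN hf in
lemma steplem (m x : ℕ) (hm : m < q) (hx : x < k ^ t) :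
    f (k ^ t * m + x) = k ^ t * ((k * m + x / k ^ (t - 1)) % q)
      + (k * (x % k ^ (t - 1)) + x / k ^ (t - 1)) := by
  have hk0 : 0 < k := by omega
  have he : t - 1 + 1 = t := by omega
  have hpe : 0 < k ^ (t - 1) := Nat.pow_pos hk0
  have hPe : k ^ t = k ^ (t - 1) * k := by rw [← pow_succ, he]
  set d := x / k ^ (t - 1) with hd
  have hdk : d < k := by
    rw [hd]
    exact (Nat.div_lt_iff_lt_mul hpe).mpr (by rw [mul_comm, ← hPe]; exact hx)
  have hdiv : (k ^ t * m + x) / k ^ (t - 1) = k * m + d := by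
    rw [hPe, mul_assoc, Nat.mul_add_div hpe]
  have hdm : (k * m + d) % k = d := by
    rw [Nat.mul_add_mod, Nat.mod_eq_of_lt hdk]
  have hxd : k ^ (t - 1) * d + x % k ^ (t - 1) = x := Nat.div_add_mod x _
  have hy : k * (x % k ^ (t - 1)) + d < k ^ t := by
    have h1 : x % k ^ (t - 1) < k ^ (t - 1) := Nat.mod_lt _ hpe
    calc k * (x % k ^ (t - 1)) + d < k * (x % k ^ (t - 1)) + k := by omega
      _ = k * (x % k ^ (t - 1) + 1) := by ring
      _ ≤ k * k ^ (t - 1) := Nat.mul_le_mul_left _ (by omega)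
      _ = k ^ t := by rw [mul_comm, ← hPe]
  have hsplit : k * (k ^ t * m + x) + d
      = k ^ t * (k * m + d) + (k * (x % k ^ (t - 1)) + d) := by
    conv_lhs => rw [← hxd]
    rw [hPe]; ring
  rw [hf, hdiv, hdm, hsplit, hN, modlem _ _ _ _ (by omega) hy]

include hk ht hq hN hf in
lemma iterlem : ∀ i, i ≤ t → ∀ m x, m < q → x < k ^ t →
    f^[i] (k ^ t * m + x) = k ^ t * ((k ^ i * m + x / k ^ (t - i)) % q)
      + (k ^ i * (x % k ^ (t - i)) + x / k ^ (t - i)) := by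
  have hk0 : 0 < k := by omega
  intro i
  induction i with
  | zero =>
    intro _ m x hm hx
    simp [Nat.mod_eq_of_lt hm, Nat.div_eq_of_lt hx, Nat.mod_eq_of_lt hx]
  | succ i ih =>
    intro hit m x hm hx
    have hi : i ≤ t := by omega
    have hilt : i < t := by omega
    set e := t - 1 - i with hedef
    have he1 : t - i = e + 1 := by omega
    have he2 : t - (i + 1) = e := by omega
    have hies : i + e = t - 1 := by omega
    have hpe : 0 < k ^ e := Nat.pow_pos hk0
    have hpe1 : 0 < k ^ (e + 1) := Nat.pow_pos hk0
    have hpi : 0 < k ^ i := Nat.pow_pos hk0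
    have hpt1 : 0 < k ^ (t - 1) := Nat.pow_pos hk0
    rw [Function.iterate_succ_apply' f i, ih hi m x hm hx, he1]
    set m' := (k ^ i * m + x / k ^ (e + 1)) % q with hm'def
    set x' := k ^ i * (x % k ^ (e + 1)) + x / k ^ (e + 1) with hx'def
    have hm' : m' < q := Nat.mod_lt _ (by omega)
    have hdivlt : x / k ^ (e + 1) < k ^ i := by
      apply (Nat.div_lt_iff_lt_mul hpe1).mpr
      calc x < k ^ t := hx
        _ = k ^ i * k ^ (e + 1) := by rw [← pow_add]; congr 1; omega
    have hx' : x' < k ^ t := by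
      have h1 : x % k ^ (e + 1) < k ^ (e + 1) := Nat.mod_lt _ hpe1
      calc x' < k ^ i * (x % k ^ (e + 1)) + k ^ i := by omega
        _ = k ^ i * (x % k ^ (e + 1) + 1) := by ring
        _ ≤ k ^ i * k ^ (e + 1) := Nat.mul_le_mul_left _ (by omega)
        _ = k ^ t := by rw [← pow_add]; congr 1; omega
    rw [steplem k t q N hk ht hq hN f hf m' x' hm' hx']
    -- digit structure of x'
    set d := x / k ^ e % k with hddef
    have hmodsplit : k ^ e * d + x % k ^ e = x % k ^ (e + 1) := by
      have h1 : x % k ^ (e + 1) / k ^ e = x / k ^ e % k := by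
        rw [pow_succ]; exact Nat.mod_mul_right_div_self x _ _
      have h2 : x % k ^ (e + 1) % k ^ e = x % k ^ e :=
        Nat.mod_mod_of_dvd x ⟨k, by rw [pow_succ]⟩
      conv_rhs => rw [← Nat.div_add_mod (x % k ^ (e + 1)) (k ^ e)]
      rw [h1, h2]
    set z := k ^ i * (x % k ^ e) + x / k ^ (e + 1) with hzdef
    have hx'split : x' = k ^ (t - 1) * d + z := by
      rw [hx'def, ← hmodsplit, hzdef]
      rw [show k ^ (t-1) = k ^ i * k ^ e by rw [← pow_add, hies]]
      ring
    have hz : z < k ^ (t - 1) := by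
      have h1 : x % k ^ e < k ^ e := Nat.mod_lt _ hpe
      calc z < k ^ i * (x % k ^ e) + k ^ i := by omega
        _ = k ^ i * (x % k ^ e + 1) := by ring
        _ ≤ k ^ i * k ^ e := Nat.mul_le_mul_left _ (by omega)
        _ = k ^ (t - 1) := by rw [← pow_add, hies]
    have hx'div : x' / k ^ (t - 1) = d := by
      rw [hx'split, Nat.mul_add_div hpt1, Nat.div_eq_of_lt hz]
      omega
    have hx'mod : x' % k ^ (t - 1) = z := by
      rw [hx'split, Nat.mul_add_mod, Nat.mod_eq_of_lt hz]
    -- digit identity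
    have hdig : k * (x / k ^ (e + 1)) + d = x / k ^ e := by
      have h1 : x / k ^ (e + 1) = x / k ^ e / k := by
        rw [Nat.div_div_eq_div_mul, ← pow_succ]
      rw [h1, hddef]
      exact Nat.div_add_mod (x / k ^ e) k
    -- mod q arithmetic
    have hmq : (k * m' + d) % q = (k ^ (i + 1) * m + x / k ^ e) % q := by
      have h1 : k * m' + d ≡ k * (k ^ i * m + x / k ^ (e + 1)) + d [MOD q] :=
        ((Nat.mod_modEq _ q).mul_left k).add_right d
      have h2 : k * (k ^ i * m + x / k ^ (e + 1)) + d
          = k ^ (i + 1) * m + x / k ^ e := by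
        rw [← hdig, pow_succ]; ring
      rw [← h2]; exact h1
    have hxq : k * (x' % k ^ (t - 1)) + d = k ^ (i + 1) * (x % k ^ e) + x / k ^ e := by
      rw [hx'mod, hzdef, ← hdig, pow_succ]; ring
    rw [hx'div, hmq, hxq, he2]

include hk ht hq hN hf in
lemma iterslem : ∀ s, ∀ m x, m < q → x < k ^ t →
    f^[t * s] (k ^ t * m + x)
      = k ^ t * ((k ^ (t * s) * m + x * geomS (k ^ t) s) % q) + x := by
  have hk0 : 0 < k := by omega
  have itert : ∀ m x, m < q → x < k ^ t →
      f^[t] (k ^ t * m + x) = k ^ t * ((k ^ t * m + x) % q) + x := by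
    intro m x hm hx
    have := iterlem k t q N hk ht hq hN f hf t le_rfl m x hm hx
    simpa [Nat.sub_self, pow_zero, Nat.div_one, Nat.mod_one, mul_zero] using this
  intro s
  induction s with
  | zero =>
    intro m x hm hx
    simp [geomS, Nat.mod_eq_of_lt hm]
  | succ s ih =>
    intro m x hm hx
    have hts : t * (s + 1) = t + t * s := by ring
    rw [hts, Function.iterate_add_apply, ih m x hm hx]
    set A := (k ^ (t * s) * m + x * geomS (k ^ t) s) % q with hAdef
    have hA : A < q := Nat.mod_lt _ (by omega)
    rw [itert A x hA hx]
    have h1 : k ^ t * A + x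
        ≡ k ^ t * (k ^ (t * s) * m + x * geomS (k ^ t) s) + x [MOD q] :=
      ((Nat.mod_modEq _ q).mul_left (k ^ t)).add_right x
    have h2 : k ^ t * (k ^ (t * s) * m + x * geomS (k ^ t) s) + x
        = k ^ (t + t * s) * m + x * geomS (k ^ t) (s + 1) := by
      show _ = _ * m + x * (k ^ t * geomS (k ^ t) s + 1)
      rw [pow_add]
      ring
    have h3 : (k ^ t * A + x) % q
        = (k ^ (t + t * s) * m + x * geomS (k ^ t) (s + 1)) % q := by
      rw [← h2]; exact h1
    rw [h3]

end Main

theorem cycle_length_dvd_order (N k t q : ℕ) (hk : 2 ≤ k) (ht : 1 ≤ t) (hq : 1 ≤ q)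
    (hco : Nat.Coprime q k) (hN : N = k ^ t * q)
    (f : ℕ → ℕ) (hf : ∀ A, f A = (k * A + A / k ^ (t - 1) % k) % N) :
    ∀ x < N, f^[orderOf (k : ZMod (N - q))] x = x := by
  have hk0 : 0 < k := by omega
  have hpt : 0 < k ^ t := Nat.pow_pos hk0
  have hkt2 : 2 ≤ k ^ t := by
    calc 2 ≤ k := hk
      _ = k ^ 1 := (pow_one k).symm
      _ ≤ k ^ t := Nat.pow_le_pow_right hk0 ht
  set M := orderOf (k : ZMod (N - q)) with hM
  -- N - q = q * (k^t - 1)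
  have hD : N - q = q * (k ^ t - 1) := by
    obtain ⟨c, hc⟩ : ∃ c, k ^ t = c + 1 := ⟨k ^ t - 1, by omega⟩
    rw [hN, hc, add_mul, one_mul, Nat.add_sub_cancel, mul_comm,
      show c + 1 - 1 = c from rfl]
  have hDpos : 0 < N - q := by
    rw [hD]; exact Nat.mul_pos (by omega) (by omega)
  -- (N - q) ∣ k^M - 1
  have h1 : ((k : ZMod (N - q))) ^ M = 1 := pow_orderOf_eq_one _
  have h2 : ((k ^ M : ℕ) : ZMod (N - q)) = ((1 : ℕ) : ZMod (N - q)) := by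
    push_cast; rw [h1]
  have h3 : k ^ M ≡ 1 [MOD N - q] :=
    ((ZMod.natCast_eq_natCast_iff _ _ _).mp h2)
  have hMdvd : (N - q) ∣ k ^ M - 1 :=
    (Nat.modEq_iff_dvd' (Nat.one_le_pow _ _ hk0)).mp h3.symm
  -- t ∣ M
  have hktd : (k ^ t - 1) ∣ (N - q) := ⟨q, by rw [hD, mul_comm]⟩
  have hdvd2 : (k ^ t - 1) ∣ k ^ M - 1 := hktd.trans hMdvd
  have htM : t ∣ M := by
    set r := M % t with hr
    have hrt : r < t := Nat.mod_lt _ (by omega)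
    have hkt1 : (k ^ t) ≡ 1 [MOD k ^ t - 1] :=
      ((Nat.modEq_iff_dvd' (Nat.one_le_pow _ _ hk0)).mpr dvd_rfl).symm
    have hMsplit : k ^ M = (k ^ t) ^ (M / t) * k ^ r := by
      rw [← pow_mul, ← pow_add]; congr 1; have := Nat.div_add_mod M t; omega
    have hMr : k ^ M ≡ k ^ r [MOD k ^ t - 1] := by
      calc k ^ M = (k ^ t) ^ (M / t) * k ^ r := hMsplit
        _ ≡ 1 ^ (M / t) * k ^ r [MOD k ^ t - 1] := (hkt1.pow _).mul_right _
        _ = k ^ r := by rw [one_pow, one_mul]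
    have h3' : k ^ M ≡ 1 [MOD k ^ t - 1] := h3.of_dvd hktd
    have hr1 : k ^ r ≡ 1 [MOD k ^ t - 1] := hMr.symm.trans h3'
    have hrd : (k ^ t - 1) ∣ k ^ r - 1 :=
      (Nat.modEq_iff_dvd' (Nat.one_le_pow _ _ hk0)).mp hr1.symm
    have hrlt : k ^ r - 1 < k ^ t - 1 := by
      have := Nat.pow_lt_pow_right (show 1 < k by omega) hrt
      omega
    have hr0 : k ^ r - 1 = 0 := Nat.eq_zero_of_dvd_of_lt hrd hrlt
    have : r = 0 := by
      by_contra hne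
      have := Nat.le_self_pow hne k
      omega
    exact Nat.dvd_of_mod_eq_zero this
  obtain ⟨s, hMs⟩ := htM
  -- q divides the geometric sum
  have hgeom : (k ^ t - 1) * geomS (k ^ t) s + 1 = (k ^ t) ^ s :=
    geomS_spec (k ^ t) (by omega) s
  have hgeom' : (k ^ t - 1) * geomS (k ^ t) s = (k ^ t) ^ s - 1 :=
    (Nat.sub_eq_of_eq_add hgeom.symm).symm
  have hqG : q ∣ geomS (k ^ t) s := by
    have h4 : (k ^ t - 1) * q ∣ (k ^ t - 1) * geomS (k ^ t) s := by
      rw [mul_comm (k ^ t - 1) q, ← hD, hgeom', ← pow_mul, ← hMs]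
      exact hMdvd
    exact (Nat.mul_dvd_mul_iff_left (show 0 < k ^ t - 1 by omega)).mp h4
  have hq1 : k ^ M ≡ 1 [MOD q] := h3.of_dvd ⟨k ^ t - 1, hD⟩
  -- final assembly
  intro x hx
  set m := x / k ^ t with hmdef
  set r := x % k ^ t with hrdef
  have hm : m < q := by
    rw [hmdef]
    exact (Nat.div_lt_iff_lt_mul hpt).mpr (by rw [mul_comm, ← hN]; exact hx)
  have hr : r < k ^ t := Nat.mod_lt _ hpt
  have hxeq : k ^ t * m + r = x := Nat.div_add_mod x (k ^ t)
  have key := iterslem k t q N hk ht hq hN f hf s m r hm hr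
  have hmod : (k ^ (t * s) * m + r * geomS (k ^ t) s) % q = m := by
    have c1 : k ^ (t * s) * m + r * geomS (k ^ t) s ≡ 1 * m + r * 0 [MOD q] := by
      apply Nat.ModEq.add
      · exact Nat.ModEq.mul_right m (by rw [← hMs]; exact hq1)
      · exact Nat.ModEq.mul_left r (Nat.modEq_zero_iff_dvd.mpr hqG)
    have c2 : (k ^ (t * s) * m + r * geomS (k ^ t) s) % q = (1 * m + r * 0) % q := c1
    rw [c2]
    simp [Nat.mod_eq_of_lt hm]
  rw [← hxeq, hMs, key, hmod]
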